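/- Let n ≥ 2 and a > 0. There exists a constant κ ∈ (0, ∞), depending only on n and a, such that for every bounded open set U contained in the open upper half-space {x_n > 0} and every x ∈ U, the limit lim_{ε → 0⁺} ∫_U g_ε(x,y) dy exists and equals κ; in particular the limit is independent of U and of x. -/

import Mathlib

open MeasureTheory Filter

/-- The kernel `g_ε(x,y) = yₙ^{a+2} (ε(1−ε))^{(a+2)/2} (|x−y|² + 4ε xₙ yₙ)^{−(a+n+2)/2}`,
the `n`-th coordinate being the coordinate `i`. -/
noncomputable def gker {n : ℕ} (a : ℝ) (i : Fin n) (ε : ℝ)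
    (x y : EuclideanSpace ℝ (Fin n)) : ℝ :=
  (y i) ^ (a + 2) * (ε * (1 - ε)) ^ ((a + 2) / 2) *
    (‖x - y‖ ^ 2 + 4 * ε * x i * y i) ^ (-(a + (n : ℝ) + 2) / 2)

lemma coord_abs_le_norm {n : ℕ} (v : EuclideanSpace ℝ (Fin n)) (i : Fin n) :
    |v i| ≤ ‖v‖ := by
  rw [EuclideanSpace.norm_eq, ← Real.sqrt_sq_eq_abs]
  apply Real.sqrt_le_sqrt
  have h := Finset.single_le_sum (f := fun j => ‖v j‖ ^ 2)
    (fun j _ => sq_nonneg _) (Finset.mem_univ i)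
  simpa [Real.norm_eq_abs, sq_abs] using h

set_option maxHeartbeats 1000000 in
/-- For `n ≥ 2` and `a > 0` there is a constant `κ ∈ (0,∞)`, depending
only on `n` and `a`, such that for every bounded open `U` contained in the open upper
half-space and every `x ∈ U`, `∫_U g_ε(x,y) dy → κ` as `ε → 0⁺`. -/
theorem stmt_11 (n : ℕ) (hn : 2 ≤ n) (a : ℝ) (ha : 0 < a) :
    ∃ κ : ℝ, 0 < κ ∧
      ∀ U : Set (EuclideanSpace ℝ (Fin n)),
        IsOpen U → Bornology.IsBounded U →
        U ⊆ {x : EuclideanSpace ℝ (Fin n) | 0 < x ⟨n - 1, by omega⟩} →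
        ∀ x ∈ U,
          Tendsto (fun ε => ∫ y in U, gker a (⟨n - 1, by omega⟩ : Fin n) ε x y)
            (nhdsWithin 0 (Set.Ioi 0)) (nhds κ) := by
  classical
  have hfr : (Module.finrank ℝ (EuclideanSpace ℝ (Fin n)) : ℝ) < a + (n : ℝ) + 2 := by
    rw [finrank_euclideanSpace_fin]; linarith
  have hCint : Integrable
      (fun v : EuclideanSpace ℝ (Fin n) => (1 + ‖v‖ ^ 2) ^ (-(a + (n : ℝ) + 2) / 2)) :=
    integrable_rpow_neg_one_add_norm_sq hfr
  set C : ℝ := ∫ v : EuclideanSpace ℝ (Fin n), (1 + ‖v‖ ^ 2) ^ (-(a + (n : ℝ) + 2) / 2) with hC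
  have hCpos : 0 < C := by
    rw [hC, integral_pos_iff_support_of_nonneg_ae
      (Filter.Eventually.of_forall fun v => by positivity) hCint]
    have hsupp : (Function.support
        (fun v : EuclideanSpace ℝ (Fin n) => (1 + ‖v‖ ^ 2) ^ (-(a + (n : ℝ) + 2) / 2)))
        = Set.univ := by
      ext v
      simp only [Function.mem_support, Set.mem_univ, iff_true]
      positivity
    rw [hsupp]
    exact isOpen_univ.measure_pos volume ⟨0, trivial⟩
  refine ⟨(2 : ℝ) ^ (-(a + 2)) * C,
    mul_pos (Real.rpow_pos_of_pos two_pos _) hCpos, ?_⟩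
  intro U hUo hUb hUsub x hxU
  set i : Fin n := ⟨n - 1, by omega⟩ with hi
  have hxi : 0 < x i := hUsub hxU
  obtain ⟨R₀, hR₀⟩ := hUb.exists_norm_le
  set R : ℝ := max R₀ 1 with hRdef
  have hR1 : (1 : ℝ) ≤ R := le_max_right _ _
  have hRb : ∀ y ∈ U, ‖y‖ ≤ R := fun y hy => (hR₀ y hy).trans (le_max_left _ _)
  set ψ : ℝ → EuclideanSpace ℝ (Fin n) → ℝ := fun ε w =>
    (x i + Real.sqrt ε * w i) ^ (a + 2) * (1 - ε) ^ ((a + 2) / 2) *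
      (‖w‖ ^ 2 + 4 * x i * (x i + Real.sqrt ε * w i)) ^ (-(a + (n : ℝ) + 2) / 2) with hψ
  set F : ℝ → EuclideanSpace ℝ (Fin n) → ℝ := fun ε =>
    Set.indicator ((fun w : EuclideanSpace ℝ (Fin n) => x + Real.sqrt ε • w) ⁻¹' U) (ψ ε) with hF
  have hyco : ∀ (ε : ℝ) (w : EuclideanSpace ℝ (Fin n)),
      (x + Real.sqrt ε • w) i = x i + Real.sqrt ε * w i := fun _ _ => rfl
  have hUmeas : MeasurableSet U := hUo.measurableSet
  -- Step 1 : change of variables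
  have step1 : ∀ ε ∈ Set.Ioo (0 : ℝ) 1,
      ∫ y in U, gker a i ε x y = ∫ w, F ε w := by
    intro ε hε
    have hsq : 0 < Real.sqrt ε := Real.sqrt_pos.2 hε.1
    have key : ∀ w : EuclideanSpace ℝ (Fin n),
        (Real.sqrt ε ^ n) •
          (U.indicator (fun y => gker a i ε x y) (x + Real.sqrt ε • w)) = F ε w := by
      intro w
      by_cases hw : x + Real.sqrt ε • w ∈ U
      · simp only [hF]
        rw [Set.indicator_of_mem hw, Set.indicator_of_mem (show w ∈ (fun w : EuclideanSpace ℝ (Fin n) => x + Real.sqrt ε • w) ⁻¹' U from hw)]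
        have hyi : (0 : ℝ) < x i + Real.sqrt ε * w i := by
          have h := hUsub hw; rw [Set.mem_setOf_eq] at h
          rw [← hyco ε w]; exact h
        have hA : (0 : ℝ) ≤ ‖w‖ ^ 2 + 4 * x i * (x i + Real.sqrt ε * w i) := by
          have h4 : 0 < 4 * x i * (x i + Real.sqrt ε * w i) :=
            mul_pos (mul_pos (by norm_num : (0:ℝ) < 4) hxi) hyi
          linarith [sq_nonneg ‖w‖]
        have hnorm : ‖x - (x + Real.sqrt ε • w)‖ ^ 2 = ε * ‖w‖ ^ 2 := by
          have hxx : x - (x + Real.sqrt ε • w) = -(Real.sqrt ε • w) := by abel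
          rw [hxx, norm_neg, norm_smul, Real.norm_eq_abs,
            abs_of_nonneg (Real.sqrt_nonneg ε), mul_pow, Real.sq_sqrt hε.1.le]
        simp only [gker]
        rw [hnorm, hyco ε w]
        have e2 : (ε * (1 - ε)) ^ ((a + 2) / 2)
            = ε ^ ((a + 2) / 2) * (1 - ε) ^ ((a + 2) / 2) :=
          Real.mul_rpow hε.1.le (by linarith [hε.2])
        have e4 : (ε * ‖w‖ ^ 2 + 4 * ε * x i * (x i + Real.sqrt ε * w i))
              ^ (-(a + (n : ℝ) + 2) / 2)
            = ε ^ (-(a + (n : ℝ) + 2) / 2) *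
              (‖w‖ ^ 2 + 4 * x i * (x i + Real.sqrt ε * w i)) ^ (-(a + (n : ℝ) + 2) / 2) := by
          rw [show ε * ‖w‖ ^ 2 + 4 * ε * x i * (x i + Real.sqrt ε * w i)
              = ε * (‖w‖ ^ 2 + 4 * x i * (x i + Real.sqrt ε * w i)) by ring,
            Real.mul_rpow hε.1.le hA]
        have e1 : Real.sqrt ε ^ n = ε ^ ((n : ℝ) / 2) := by
          rw [Real.sqrt_eq_rpow, ← Real.rpow_natCast (ε ^ ((1:ℝ)/2)) n,
            ← Real.rpow_mul hε.1.le]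
          congr 1; ring
        have e5 : ε ^ ((n : ℝ) / 2) * (ε ^ ((a + 2) / 2) * ε ^ (-(a + (n : ℝ) + 2) / 2)) = 1 := by
          rw [← Real.rpow_add hε.1, ← Real.rpow_add hε.1,
            show (n : ℝ) / 2 + ((a + 2) / 2 + -(a + (n : ℝ) + 2) / 2) = 0 by ring,
            Real.rpow_zero]
        rw [e2, e4, smul_eq_mul, e1]
        simp only [hψ]
        calc ε ^ ((n : ℝ) / 2) *
              ((x i + Real.sqrt ε * w i) ^ (a + 2) *
                (ε ^ ((a + 2) / 2) * (1 - ε) ^ ((a + 2) / 2)) *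
                (ε ^ (-(a + (n : ℝ) + 2) / 2) *
                  (‖w‖ ^ 2 + 4 * x i * (x i + Real.sqrt ε * w i)) ^ (-(a + (n : ℝ) + 2) / 2)))
            = (ε ^ ((n : ℝ) / 2) * (ε ^ ((a + 2) / 2) * ε ^ (-(a + (n : ℝ) + 2) / 2))) *
              ((x i + Real.sqrt ε * w i) ^ (a + 2) * (1 - ε) ^ ((a + 2) / 2) *
                (‖w‖ ^ 2 + 4 * x i * (x i + Real.sqrt ε * w i)) ^ (-(a + (n : ℝ) + 2) / 2)) := by
              ring
          _ = (x i + Real.sqrt ε * w i) ^ (a + 2) * (1 - ε) ^ ((a + 2) / 2) *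
                (‖w‖ ^ 2 + 4 * x i * (x i + Real.sqrt ε * w i)) ^ (-(a + (n : ℝ) + 2) / 2) := by
              rw [e5, one_mul]
      · simp only [hF]
        rw [Set.indicator_of_notMem hw, smul_zero,
          Set.indicator_of_notMem (show w ∉ (fun w : EuclideanSpace ℝ (Fin n) => x + Real.sqrt ε • w) ⁻¹' U from hw)]
    have hcs := Measure.integral_comp_smul_of_nonneg (volume)
      (fun z : EuclideanSpace ℝ (Fin n) => U.indicator (fun y => gker a i ε x y) (x + z))
      (Real.sqrt ε) (hR := hsq.le)
    rw [finrank_euclideanSpace_fin] at hcs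
    calc ∫ y in U, gker a i ε x y
        = ∫ y, U.indicator (fun y => gker a i ε x y) y := (integral_indicator hUmeas).symm
      _ = ∫ z, U.indicator (fun y => gker a i ε x y) (x + z) :=
          (integral_add_left_eq_self (U.indicator fun y => gker a i ε x y) x).symm
      _ = (Real.sqrt ε ^ n) •
            ∫ w, U.indicator (fun y => gker a i ε x y) (x + Real.sqrt ε • w) := by
          rw [hcs, smul_smul, mul_inv_cancel₀ (by positivity), one_smul]
      _ = ∫ w, (Real.sqrt ε ^ n) •
            U.indicator (fun y => gker a i ε x y) (x + Real.sqrt ε • w) :=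
          (integral_smul _ _).symm
      _ = ∫ w, F ε w := by exact integral_congr_ae (Filter.Eventually.of_forall key)
  -- setup for dominated convergence
  set hlim : EuclideanSpace ℝ (Fin n) → ℝ := fun w =>
    (x i) ^ (a + 2) * (‖w‖ ^ 2 + 4 * x i * x i) ^ (-(a + (n : ℝ) + 2) / 2) with hh
  set m : ℝ := min (1 / 2) (2 * (x i) ^ 2) with hm
  have hmpos : 0 < m := lt_min (by norm_num) (by positivity)
  have hm1 : m ≤ 1 / 2 := min_le_left _ _
  have hm2 : m ≤ 2 * (x i) ^ 2 := min_le_right _ _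
  set ε₀ : ℝ := min ((x i) ^ 2 / 4) (1 / 2) with hε₀
  have hε₀pos : 0 < ε₀ := lt_min (by positivity) (by norm_num)
  set bound : EuclideanSpace ℝ (Fin n) → ℝ := fun w =>
    (R ^ (a + 2) * m ^ (-(a + (n : ℝ) + 2) / 2)) * (1 + ‖w‖ ^ 2) ^ (-(a + (n : ℝ) + 2) / 2)
    with hbd
  have hbound_int : Integrable bound := hCint.const_mul _
  have hexp_nonpos : -(a + (n : ℝ) + 2) / 2 ≤ 0 := by
    have : (0 : ℝ) ≤ a + (n : ℝ) + 2 := by positivity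
    linarith
  have hFmeas : ∀ ε : ℝ, AEStronglyMeasurable (F ε) volume := by
    intro ε
    have hset : MeasurableSet
        ((fun w : EuclideanSpace ℝ (Fin n) => x + Real.sqrt ε • w) ⁻¹' U) :=
      (hUo.preimage (by fun_prop)).measurableSet
    have hψm : Measurable (ψ ε) := by
      simp only [hψ]; fun_prop
    exact ((hψm.indicator hset).aestronglyMeasurable)
  have h_bound : ∀ᶠ ε in nhdsWithin (0 : ℝ) (Set.Ioi 0),
      ∀ᵐ w : EuclideanSpace ℝ (Fin n), ‖F ε w‖ ≤ bound w := by
    filter_upwards [Ioo_mem_nhdsGT hε₀pos] with ε hε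
    refine Filter.Eventually.of_forall fun w => ?_
    have hbdnn : 0 ≤ bound w := by
      rw [hbd]
      have h1 : (0:ℝ) ≤ R ^ (a + 2) := Real.rpow_nonneg (by linarith) _
      have h2 : (0:ℝ) ≤ m ^ (-(a + (n : ℝ) + 2) / 2) := Real.rpow_nonneg hmpos.le _
      have h3 : (0:ℝ) ≤ (1 + ‖w‖ ^ 2) ^ (-(a + (n : ℝ) + 2) / 2) :=
        Real.rpow_nonneg (by positivity) _
      positivity
    by_cases hw : x + Real.sqrt ε • w ∈ U
    · have hε1 : 0 < ε := hε.1
      have hεx : ε < (x i) ^ 2 / 4 := lt_of_lt_of_le hε.2 (min_le_left _ _)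
      have hεhalf : ε < 1 / 2 := lt_of_lt_of_le hε.2 (min_le_right _ _)
      have hsq : 0 < Real.sqrt ε := Real.sqrt_pos.2 hε1
      have hsqlt : Real.sqrt ε < x i / 2 := by
        have h := Real.sqrt_lt_sqrt hε1.le hεx
        rwa [show (x i) ^ 2 / 4 = (x i / 2) ^ 2 by ring,
          Real.sqrt_sq (by positivity)] at h
      have hyi : (0 : ℝ) < x i + Real.sqrt ε * w i := by
        have h := hUsub hw; rw [Set.mem_setOf_eq] at h
        rw [← hyco ε w]; exact h
      have hyiR : x i + Real.sqrt ε * w i ≤ R := by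
        have h1 := hRb _ hw
        have h2 : |x i + Real.sqrt ε * w i| ≤ ‖x + Real.sqrt ε • w‖ := by
          rw [← hyco ε w]; exact coord_abs_le_norm _ i
        exact (le_abs_self _).trans (h2.trans h1)
      have hA : (0 : ℝ) < ‖w‖ ^ 2 + 4 * x i * (x i + Real.sqrt ε * w i) := by
        have h4 : 0 < 4 * x i * (x i + Real.sqrt ε * w i) :=
          mul_pos (mul_pos (by norm_num : (0:ℝ) < 4) hxi) hyi
        linarith [sq_nonneg ‖w‖]
      have hψnn : 0 ≤ ψ ε w := by
        rw [hψ]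
        exact mul_nonneg (mul_nonneg (Real.rpow_nonneg hyi.le _)
          (Real.rpow_nonneg (by linarith) _)) (Real.rpow_nonneg hA.le _)
      have hmA : m * (1 + ‖w‖ ^ 2) ≤ ‖w‖ ^ 2 + 4 * x i * (x i + Real.sqrt ε * w i) := by
        by_cases hcase : Real.sqrt ε * |w i| ≤ x i / 2
        · have hyge : x i / 2 ≤ x i + Real.sqrt ε * w i := by
            have k := mul_le_mul_of_nonneg_left (neg_abs_le (w i)) (Real.sqrt_nonneg ε)
            have k2 : Real.sqrt ε * -|w i| = -(Real.sqrt ε * |w i|) := by ring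
            linarith
          have h2xi : 2 * (x i) ^ 2 ≤ 4 * x i * (x i + Real.sqrt ε * w i) := by
            have k := mul_le_mul_of_nonneg_left hyge
              (by positivity : (0:ℝ) ≤ 4 * x i)
            have k2 : 4 * x i * (x i / 2) = 2 * (x i) ^ 2 := by ring
            linarith
          have k3 := mul_le_mul_of_nonneg_right hm1 (sq_nonneg ‖w‖)
          have k4 : m * (1 + ‖w‖ ^ 2) = m + m * ‖w‖ ^ 2 := by ring
          linarith [sq_nonneg ‖w‖]
        · push_neg at hcase
          have h1' : Real.sqrt ε * 1 < Real.sqrt ε * |w i| := by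
            rw [mul_one]; exact lt_trans hsqlt hcase
          have hwi1 : 1 < |w i| := lt_of_mul_lt_mul_left h1' hsq.le
          have hw1 : 1 ≤ ‖w‖ := hwi1.le.trans (coord_abs_le_norm w i)
          have hw2 : (1 : ℝ) ≤ ‖w‖ ^ 2 := by
            calc (1 : ℝ) = 1 * 1 := by ring
              _ ≤ ‖w‖ * ‖w‖ := mul_le_mul hw1 hw1 zero_le_one (norm_nonneg w)
              _ = ‖w‖ ^ 2 := (pow_two _).symm
          have h4yi : 0 ≤ 4 * x i * (x i + Real.sqrt ε * w i) :=
            le_of_lt (mul_pos (by positivity) hyi)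
          have k3 := mul_le_mul_of_nonneg_right hm1 (sq_nonneg ‖w‖)
          have k4 : m * (1 + ‖w‖ ^ 2) = m + m * ‖w‖ ^ 2 := by ring
          linarith
      have h3 : (‖w‖ ^ 2 + 4 * x i * (x i + Real.sqrt ε * w i)) ^ (-(a + (n : ℝ) + 2) / 2)
          ≤ m ^ (-(a + (n : ℝ) + 2) / 2) * (1 + ‖w‖ ^ 2) ^ (-(a + (n : ℝ) + 2) / 2) := by
        have := Real.rpow_le_rpow_of_nonpos (by positivity) hmA hexp_nonpos
        rwa [Real.mul_rpow hmpos.le (by positivity)] at this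
      have h1 : (x i + Real.sqrt ε * w i) ^ (a + 2) ≤ R ^ (a + 2) :=
        Real.rpow_le_rpow hyi.le hyiR (by linarith)
      have h2 : (1 - ε) ^ ((a + 2) / 2) ≤ 1 :=
        Real.rpow_le_one (by linarith) (by linarith) (by linarith)
      simp only [hF]
      rw [Set.indicator_of_mem (show w ∈ (fun w : EuclideanSpace ℝ (Fin n) => x + Real.sqrt ε • w) ⁻¹' U from hw), Real.norm_eq_abs,
        abs_of_nonneg hψnn]
      simp only [hψ]
      calc (x i + Real.sqrt ε * w i) ^ (a + 2) * (1 - ε) ^ ((a + 2) / 2) *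
            (‖w‖ ^ 2 + 4 * x i * (x i + Real.sqrt ε * w i)) ^ (-(a + (n : ℝ) + 2) / 2)
          ≤ (R ^ (a + 2) * 1) *
            (m ^ (-(a + (n : ℝ) + 2) / 2) * (1 + ‖w‖ ^ 2) ^ (-(a + (n : ℝ) + 2) / 2)) := by
            apply mul_le_mul
            · exact mul_le_mul h1 h2 (Real.rpow_nonneg (by linarith) _)
                (Real.rpow_nonneg (by linarith) _)
            · exact h3
            · exact Real.rpow_nonneg hA.le _
            · exact mul_nonneg (Real.rpow_nonneg (by linarith) _) zero_le_one
        _ = bound w := by simp only [hbd]; ring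
    · simp only [hF]
      rw [Set.indicator_of_notMem (show w ∉ (fun w : EuclideanSpace ℝ (Fin n) => x + Real.sqrt ε • w) ⁻¹' U from hw)]
      simpa using hbdnn
  have h_lim : ∀ᵐ w : EuclideanSpace ℝ (Fin n),
      Tendsto (fun ε => F ε w) (nhdsWithin (0:ℝ) (Set.Ioi 0)) (nhds (hlim w)) := by
    refine Filter.Eventually.of_forall fun w => ?_
    have hbase : Tendsto (fun ε : ℝ => Real.sqrt ε) (nhdsWithin 0 (Set.Ioi 0)) (nhds 0) := by
      have h := Real.continuous_sqrt.tendsto 0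
      rw [Real.sqrt_zero] at h
      exact h.mono_left nhdsWithin_le_nhds
    have hybase : Tendsto (fun ε : ℝ => x i + Real.sqrt ε * w i)
        (nhdsWithin 0 (Set.Ioi 0)) (nhds (x i)) := by
      have h : Tendsto (fun ε : ℝ => x i + Real.sqrt ε * w i)
          (nhdsWithin 0 (Set.Ioi 0)) (nhds (x i + 0 * w i)) :=
        Tendsto.add tendsto_const_nhds (hbase.mul_const (w i))
      simpa using h
    have hmemev : ∀ᶠ ε in nhdsWithin (0:ℝ) (Set.Ioi 0), x + Real.sqrt ε • w ∈ U := by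
      have hten : Tendsto (fun ε : ℝ => x + Real.sqrt ε • w)
          (nhdsWithin 0 (Set.Ioi 0)) (nhds x) := by
        have h : Tendsto (fun ε : ℝ => x + Real.sqrt ε • w)
            (nhdsWithin 0 (Set.Ioi 0)) (nhds (x + (0:ℝ) • w)) :=
          Tendsto.add tendsto_const_nhds (hbase.smul_const w)
        simpa using h
      exact hten.eventually_mem (hUo.mem_nhds hxU)
    have hψten : Tendsto (fun ε => ψ ε w) (nhdsWithin (0:ℝ) (Set.Ioi 0)) (nhds (hlim w)) := by
      have t1 : Tendsto (fun ε : ℝ => (x i + Real.sqrt ε * w i) ^ (a + 2))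
          (nhdsWithin 0 (Set.Ioi 0)) (nhds ((x i) ^ (a + 2))) :=
        (Real.continuousAt_rpow_const _ _ (Or.inl hxi.ne')).tendsto.comp hybase
      have t2 : Tendsto (fun ε : ℝ => (1 - ε) ^ ((a + 2) / 2))
          (nhdsWithin 0 (Set.Ioi 0)) (nhds 1) := by
        have hb : Tendsto (fun ε : ℝ => 1 - ε) (nhdsWithin 0 (Set.Ioi 0)) (nhds 1) := by
          have h : Tendsto (fun ε : ℝ => 1 - ε) (nhdsWithin (0:ℝ) (Set.Ioi 0))
              (nhds (1 - 0)) :=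
            Tendsto.sub tendsto_const_nhds (tendsto_id.mono_left nhdsWithin_le_nhds)
          simpa using h
        have h := (Real.continuousAt_rpow_const 1 ((a + 2) / 2)
          (Or.inl one_ne_zero)).tendsto.comp hb
        simpa [Real.one_rpow, Function.comp_def] using h
      have t3 : Tendsto (fun ε : ℝ =>
            (‖w‖ ^ 2 + 4 * x i * (x i + Real.sqrt ε * w i)) ^ (-(a + (n : ℝ) + 2) / 2))
          (nhdsWithin 0 (Set.Ioi 0))
          (nhds ((‖w‖ ^ 2 + 4 * x i * x i) ^ (-(a + (n : ℝ) + 2) / 2))) := by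
        have hb : Tendsto (fun ε : ℝ => ‖w‖ ^ 2 + 4 * x i * (x i + Real.sqrt ε * w i))
            (nhdsWithin 0 (Set.Ioi 0)) (nhds (‖w‖ ^ 2 + 4 * x i * x i)) :=
          Tendsto.add tendsto_const_nhds (Tendsto.mul tendsto_const_nhds hybase)
        have hne : ‖w‖ ^ 2 + 4 * x i * x i ≠ 0 := by positivity
        exact (Real.continuousAt_rpow_const _ _ (Or.inl hne)).tendsto.comp hb
      have h := (t1.mul t2).mul t3
      rw [hψ, hh]
      simpa using h
    refine hψten.congr' (hmemev.mono fun ε hmem => ?_)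
    simp only [hF]
    rw [Set.indicator_of_mem (show w ∈ (fun w : EuclideanSpace ℝ (Fin n) => x + Real.sqrt ε • w) ⁻¹' U from hmem)]
  have hmain : Tendsto (fun ε => ∫ w, F ε w) (nhdsWithin (0:ℝ) (Set.Ioi 0))
      (nhds (∫ w, hlim w)) :=
    tendsto_integral_filter_of_dominated_convergence bound
      (Filter.Eventually.of_forall hFmeas) h_bound hbound_int h_lim
  -- computing the limit integral
  have hint : ∫ w, hlim w = (2 : ℝ) ^ (-(a + 2)) * C := by
    simp only [hh]
    rw [integral_const_mul]
    have h2x : (0 : ℝ) < 2 * x i := by positivity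
    have hco := Measure.integral_comp_smul_of_nonneg (volume)
      (fun z : EuclideanSpace ℝ (Fin n) =>
        (‖z‖ ^ 2 + 4 * x i * x i) ^ (-(a + (n : ℝ) + 2) / 2)) (2 * x i) (hR := h2x.le)
    rw [finrank_euclideanSpace_fin] at hco
    have hpt : ∀ v : EuclideanSpace ℝ (Fin n),
        (‖(2 * x i) • v‖ ^ 2 + 4 * x i * x i) ^ (-(a + (n : ℝ) + 2) / 2)
        = (4 * (x i) ^ 2) ^ (-(a + (n : ℝ) + 2) / 2) *
          (1 + ‖v‖ ^ 2) ^ (-(a + (n : ℝ) + 2) / 2) := by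
      intro v
      rw [norm_smul, Real.norm_eq_abs, abs_of_nonneg h2x.le, mul_pow,
        show (2 * x i) ^ 2 * ‖v‖ ^ 2 + 4 * x i * x i
          = (4 * (x i) ^ 2) * (1 + ‖v‖ ^ 2) by ring,
        Real.mul_rpow (by positivity) (by positivity)]
    simp only [hpt] at hco
    rw [integral_const_mul, smul_eq_mul, ← hC] at hco
    have hn0 : ((2 * x i) ^ n : ℝ) ≠ 0 := by positivity
    have hIz : (∫ z : EuclideanSpace ℝ (Fin n),
        (‖z‖ ^ 2 + 4 * x i * x i) ^ (-(a + (n : ℝ) + 2) / 2))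
        = (2 * x i) ^ n * ((4 * (x i) ^ 2) ^ (-(a + (n : ℝ) + 2) / 2) * C) := by
      rw [hco, ← mul_assoc, mul_inv_cancel₀ hn0, one_mul]
    rw [hIz]
    have hconst : (x i) ^ (a + 2) *
        ((2 * x i) ^ n * (4 * (x i) ^ 2) ^ (-(a + (n : ℝ) + 2) / 2))
        = (2 : ℝ) ^ (-(a + 2)) := by
      have key : (4 * (x i) ^ 2 : ℝ) ^ (-(a + (n : ℝ) + 2) / 2)
          = (2 * x i) ^ (-(a + (n : ℝ) + 2)) := by
        rw [show (4 * (x i) ^ 2 : ℝ) = (2 * x i) ^ (2 : ℕ) by ring,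
          ← Real.rpow_natCast (2 * x i) 2, ← Real.rpow_mul h2x.le]
        congr 1
        push_cast
        ring
      rw [key, ← Real.rpow_natCast (2 * x i) n, ← Real.rpow_add h2x,
        show (n : ℝ) + -(a + (n : ℝ) + 2) = -(a + 2) by ring,
        Real.mul_rpow (by norm_num : (0:ℝ) ≤ 2) hxi.le,
        show x i ^ (a + 2) * ((2:ℝ) ^ (-(a + 2)) * x i ^ (-(a + 2)))
          = (2:ℝ) ^ (-(a + 2)) * (x i ^ (a + 2) * x i ^ (-(a + 2))) by ring,
        ← Real.rpow_add hxi, show (a + 2) + -(a + 2) = 0 by ring,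
        Real.rpow_zero, mul_one]
    calc (x i) ^ (a + 2) *
          ((2 * x i) ^ n * ((4 * (x i) ^ 2) ^ (-(a + (n : ℝ) + 2) / 2) * C))
        = ((x i) ^ (a + 2) *
            ((2 * x i) ^ n * (4 * (x i) ^ 2) ^ (-(a + (n : ℝ) + 2) / 2))) * C := by ring
      _ = (2 : ℝ) ^ (-(a + 2)) * C := by rw [hconst]
  rw [hint] at hmain
  refine hmain.congr' ?_
  filter_upwards [Ioo_mem_nhdsGT one_pos] with ε hε
  exact (step1 ε hε).symm
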